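/- Let R be a commutative ring and let A = ∏_{i=1}^m A_i be a product of Artinian primary R-algebras, each finitely generated as an R-module, such that for all i, j the simple quotients A_i/J(A_i) and A_j/J(A_j) are isomorphic as R-algebras. Let I be the annihilator in R of A_1/J(A_1) and F = R/I (so F is a field and each A_i/J(A_i) is a finite-dimensional simple F-algebra). Let k be a positive integer and let a_l = (a_{l1}, …, a_{lm}) ∈ A for l = 1, …, k. Then a_1, …, a_k generate A as an R-algebra if and only if both: (1) for each i = 1, …, m the elements a_{1i}, …, a_{ki} generate A_i as an R-algebra, and (2) for all i ≠ j there is no F-algebra isomorphism Ψ : A_j/J(A_j) → A_i/J(A_i) such that Ψ(a_{lj} + J(A_j)) = a_{li} + J(A_i) for all l = 1, …, k. -/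

import Mathlib

/-- In a left-Artinian ring, every element of the Jacobson radical is nilpotent. -/
lemma isNilpotent_of_mem_jacobson_bot {A : Type*} [Ring A] [IsArtinianRing A]
    {x : A} (hx : x ∈ Ideal.jacobson (⊥ : Ideal A)) : IsNilpotent x := by
  have mono : ∀ {p q : ℕ}, p ≤ q →
      (Ideal.span {x ^ (q+1)} : Ideal A) ≤ Ideal.span {x ^ (p+1)} := by
    intro p q hpq
    rw [Ideal.span_le]
    intro y hy
    rw [Set.mem_singleton_iff] at hy
    subst hy
    have : x ^ (q+1) = x ^ (q - p) • x ^ (p+1) := by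
      rw [smul_eq_mul, ← pow_add]
      congr 1
      omega
    rw [this]
    exact Submodule.smul_mem _ _ (Submodule.mem_span_singleton_self _)
  obtain ⟨n, hn⟩ := IsArtinian.monotone_stabilizes
    (⟨fun p => Ideal.span {x ^ (p+1)}, fun p q h => mono h⟩ : ℕ →o (Ideal A)ᵒᵈ)
  have key : x ^ (n+1) ∈ (Ideal.span {x ^ (n+2)} : Ideal A) := by
    have := hn (n+1) (Nat.le_succ n)
    have : (Ideal.span {x ^ (n+1)} : Ideal A) = Ideal.span {x ^ (n+2)} := this
    rw [← this]
    exact Submodule.mem_span_singleton_self _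
  obtain ⟨c, hc⟩ := Submodule.mem_span_singleton.mp key
  -- hc : c • x ^ (n+2) = x ^ (n+1)
  have hcx : (c * x : A) ∈ Ideal.jacobson (⊥ : Ideal A) := Submodule.smul_mem _ c hx
  have h1 : ((1 : A) - c * x) - 1 ∈ Ideal.jacobson (⊥ : Ideal A) := by
    simpa using (Ideal.jacobson (⊥ : Ideal A)).neg_mem hcx
  obtain ⟨s, hs⟩ := Ideal.exists_mul_sub_mem_of_sub_one_mem_jacobson _ h1
  rw [Ideal.mem_bot, sub_eq_zero] at hs
  refine ⟨n+1, ?_⟩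
  have h2 : (1 - c * x) * x ^ (n+1) = 0 := by
    have : c * x ^ (n+2) = x ^ (n+1) := by simpa [smul_eq_mul] using hc
    rw [sub_mul, one_mul, mul_assoc, ← pow_succ']
    rw [this, sub_self]
  calc x ^ (n+1) = (s * (1 - c * x)) * x ^ (n+1) := by rw [hs, one_mul]
    _ = s * ((1 - c * x) * x ^ (n+1)) := by rw [mul_assoc]
    _ = 0 := by rw [h2, mul_zero]

/-- A central idempotent in a simple ring is 0 or 1. -/
lemma central_idem_zero_or_one {S : Type*} [Ring S] [IsSimpleRing S] {u : S}
    (hu : IsIdempotentElem u) (hc : ∀ s, u * s = s * u) : u = 0 ∨ u = 1 := by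
  let I : TwoSidedIdeal S := TwoSidedIdeal.mk' {x | u * x = x}
    (by simp) (fun {x y} hx hy => by simp only [Set.mem_setOf_eq] at *; rw [mul_add, hx, hy])
    (fun {x} hx => by simp only [Set.mem_setOf_eq] at *; rw [mul_neg, hx])
    (fun {x y} hy => by
      simp only [Set.mem_setOf_eq] at *
      rw [← mul_assoc, hc x, mul_assoc, hy])
    (fun {x y} hx => by
      simp only [Set.mem_setOf_eq] at *
      rw [← mul_assoc, hx])
  rcases (IsSimpleRing.simple (R := S)).eq_bot_or_eq_top I with h | h
  · left
    have : u ∈ I := by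
      rw [TwoSidedIdeal.mem_mk']
      exact hu
    rwa [h, TwoSidedIdeal.mem_bot] at this
  · right
    have : (1 : S) ∈ I := by rw [h]; trivial
    rw [TwoSidedIdeal.mem_mk'] at this
    simpa using this

section PiSingle

variable {ι : Type*} [DecidableEq ι] {S : ι → Type*} [∀ i, NonUnitalNonAssocSemiring (S i)]

lemma pi_mul_single (c : ∀ i, S i) (i : ι) (x : S i) :
    c * Pi.single i x = Pi.single i (c i * x) := by
  funext j
  by_cases h : j = i
  · subst h; simp
  · simp [Pi.single_eq_of_ne h]

lemma pi_single_mul (c : ∀ i, S i) (i : ι) (x : S i) :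
    Pi.single i x * c = Pi.single i (x * c i) := by
  funext j
  by_cases h : j = i
  · subst h; simp
  · simp [Pi.single_eq_of_ne h]

lemma pi_single_mul_single (i : ι) (x y : S i) :
    Pi.single i x * Pi.single i y = Pi.single i (x * y) := by
  rw [pi_single_mul, Pi.single_eq_same]

lemma pi_single_mul_single_ne {i j : ι} (h : i ≠ j) (x : S i) (y : S j) :
    Pi.single i x * Pi.single j y = 0 := by
  rw [pi_single_mul, Pi.single_eq_of_ne h, mul_zero, Pi.single_zero]

end PiSingle

/-- Goursat-type lemma for subalgebras of finite products of simple algebras: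
if all coordinate projections are surjective and the subalgebra is not contained in
the "graph" of an isomorphism between two distinct factors, it is everything. -/
lemma subalgebra_pi_simple_eq_top {R : Type u} [CommRing R] :
    ∀ (n : ℕ) (S : Fin n → Type v) [∀ i, Ring (S i)] [∀ i, Algebra R (S i)]
      [∀ i, IsSimpleRing (S i)] (C : Subalgebra R (∀ i, S i)),
      (∀ i, C.map (Pi.evalAlgHom R S i) = ⊤) →
      (∀ i j, i ≠ j → ¬ ∃ Ψ : S j ≃ₐ[R] S i, ∀ c ∈ C, c i = Ψ (c j)) →
      C = ⊤ := by
  intro n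
  induction n with
  | zero =>
    intro S _ _ _ C _ _
    have : Subsingleton (∀ i : Fin 0, S i) := ⟨fun a b => funext fun i => i.elim0⟩
    rw [eq_top_iff]
    intro x _
    exact (Subsingleton.elim x 1) ▸ C.one_mem
  | succ n IH =>
    intro S _ _ _ C hproj hgraph
    -- restriction to the tail
    set r : (∀ i, S i) →ₐ[R] (∀ j : Fin n, S j.succ) :=
      Pi.algHom R _ (fun j => Pi.evalAlgHom R S j.succ) with hr
    set D := C.map r with hD
    have hDproj : ∀ j, D.map (Pi.evalAlgHom R _ j) = ⊤ := by
      intro j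
      rw [hD, Subalgebra.map_map]
      have : (Pi.evalAlgHom R _ j).comp r = Pi.evalAlgHom R S j.succ := by
        ext x; rfl
      rw [this]
      exact hproj j.succ
    have hDgraph : ∀ i j, i ≠ j →
        ¬ ∃ Ψ : S j.succ ≃ₐ[R] S i.succ, ∀ d ∈ D, d i = Ψ (d j) := by
      intro i j hij ⟨Ψ, hΨ⟩
      refine hgraph i.succ j.succ (fun h => hij (Fin.succ_injective n h)) ⟨Ψ, ?_⟩
      intro c hc
      exact hΨ (r c) ⟨c, hc, rfl⟩
    have hDtop : D = ⊤ := IH _ D hDproj hDgraph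
    -- surjectivity of projections of C, as existence statements
    have hsurjC : ∀ (i) (x : S i), ∃ c ∈ C, c i = x := by
      intro i x
      have : x ∈ C.map (Pi.evalAlgHom R S i) := (hproj i).symm ▸ Algebra.mem_top
      obtain ⟨c, hc, hcx⟩ := this
      exact ⟨c, hc, hcx⟩
    -- the ideal of S 0 of elements supported at 0 inside C
    let T : TwoSidedIdeal (S 0) := TwoSidedIdeal.mk' {x | Pi.single 0 x ∈ C}
      (by simp only [Set.mem_setOf_eq, Pi.single_zero]; exact C.zero_mem)
      (fun {x y} hx hy => by
        simp only [Set.mem_setOf_eq, Pi.single_add] at *; exact C.add_mem hx hy)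
      (fun {x} hx => by
        simp only [Set.mem_setOf_eq, Pi.single_neg] at *; exact C.neg_mem hx)
      (fun {x y} hy => by
        simp only [Set.mem_setOf_eq] at *
        obtain ⟨c, hc, hcx⟩ := hsurjC 0 x
        have := C.mul_mem hc hy
        rwa [pi_mul_single, hcx] at this)
      (fun {x y} hx => by
        simp only [Set.mem_setOf_eq] at *
        obtain ⟨c, hc, hcy⟩ := hsurjC 0 y
        have := C.mul_mem hx hc
        rwa [pi_single_mul, hcy] at this)
    have memT : ∀ x : S 0, x ∈ T ↔ Pi.single 0 x ∈ C := fun x => TwoSidedIdeal.mem_mk' _ _ _ _ _ _ x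
    rcases (IsSimpleRing.simple (R := S 0)).eq_bot_or_eq_top T with hT | hT
    · -- T = ⊥ : derive a contradiction by producing a graph isomorphism
      exfalso
      -- ρ : C → tail product, bijective
      set ρ : C →ₐ[R] (∀ j : Fin n, S j.succ) := r.comp C.val with hρ
      have hρsurj : Function.Surjective ρ := by
        intro y
        have : y ∈ D := hDtop.symm ▸ Algebra.mem_top
        obtain ⟨c, hc, hcy⟩ := this
        exact ⟨⟨c, hc⟩, hcy⟩
      have hρinj : Function.Injective ρ := by
        intro c c' h
        have hsub : ((c : ∀ i, S i) - c') ∈ C := C.sub_mem c.2 c'.2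
        have htail : ∀ j : Fin n, ((c : ∀ i, S i) - c') j.succ = 0 := by
          intro j
          have := congrFun (sub_eq_zero.mpr h) j
          simpa [hρ, hr] using this
        have hform : ((c : ∀ i, S i) - c') = Pi.single 0 (((c : ∀ i, S i) - c') 0) := by
          funext i
          refine Fin.cases ?_ ?_ i
          · rw [Pi.single_eq_same]
          · intro j; rw [htail j, Pi.single_eq_of_ne (Fin.succ_ne_zero j)]
        have h0 : (((c : ∀ i, S i) - c') 0) ∈ T := by
          rw [memT, ← hform]; exact hsub
        rw [hT, TwoSidedIdeal.mem_bot] at h0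
        have : ((c : ∀ i, S i) - c') = 0 := by rw [hform, h0, Pi.single_zero]
        exact Subtype.ext (sub_eq_zero.mp this)
      let ψ : C ≃ₐ[R] (∀ j : Fin n, S j.succ) := AlgEquiv.ofBijective ρ ⟨hρinj, hρsurj⟩
      set φ : (∀ j : Fin n, S j.succ) →ₐ[R] S 0 :=
        ((Pi.evalAlgHom R S 0).comp C.val).comp (ψ.symm : _ ≃ₐ[R] _).toAlgHom with hφ
      have hφρ : ∀ c : C, φ (ρ c) = (c : ∀ i, S i) 0 := by
        intro c
        have : ψ.symm (ρ c) = c := by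
          have : ψ c = ρ c := rfl
          rw [← this, AlgEquiv.symm_apply_apply]
        simp only [hφ, AlgHom.coe_comp, Function.comp_apply, AlgEquiv.toAlgHom_eq_coe,
          AlgHom.coe_coe]
        erw [this]
        rfl
      have hφsurj : Function.Surjective φ := by
        intro s
        obtain ⟨c, hc, hcs⟩ := hsurjC 0 s
        exact ⟨ρ ⟨c, hc⟩, by rw [hφρ]; exact hcs⟩
      -- idempotents
      set u : Fin n → S 0 := fun j => φ (Pi.single j 1) with hu
      have huidem : ∀ j, IsIdempotentElem (u j) := by
        intro j
        unfold IsIdempotentElem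
        rw [hu, ← map_mul, pi_single_mul_single, one_mul]
      have hucentral : ∀ j (s : S 0), u j * s = s * u j := by
        intro j s
        obtain ⟨y, hy⟩ := hφsurj s
        have hcomm : Pi.single j (1 : S j.succ) * y = y * Pi.single j 1 := by
          rw [pi_single_mul, pi_mul_single, one_mul, mul_one]
        rw [← hy, hu, ← map_mul, ← map_mul, hcomm]
      have husum : ∑ j, u j = 1 := by
        rw [hu, ← map_sum]
        have : (∑ j, Pi.single j (1 : S j.succ) : ∀ j : Fin n, S j.succ) = 1 := by
          have := Finset.univ_sum_single (1 : ∀ j : Fin n, S j.succ)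
          simpa using this
        rw [this, map_one]
      -- find j with u j = 1
      have : ∃ j, u j = 1 := by
        by_contra hno
        push_neg at hno
        have : ∀ j, u j = 0 := by
          intro j
          rcases central_idem_zero_or_one (huidem j) (hucentral j) with h | h
          · exact h
          · exact absurd h (hno j)
        have : (1 : S 0) = 0 := by
          rw [← husum, Finset.sum_eq_zero (fun j _ => this j)]
        exact one_ne_zero this
      obtain ⟨j, huj⟩ := this
      -- build the graph isomorphism Ψ : S j.succ ≃ₐ[R] S 0
      have hortho : ∀ (y : ∀ j : Fin n, S j.succ), φ y = φ (Pi.single j (y j)) := by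
        intro y
        have h1 : y * Pi.single j (1 : S j.succ) = Pi.single j (y j) := by
          rw [pi_mul_single, mul_one]
        calc φ y = φ y * u j := by rw [huj, mul_one]
          _ = φ (y * Pi.single j 1) := by rw [hu, ← map_mul]
          _ = φ (Pi.single j (y j)) := by rw [h1]
      let Ψ₀ : S j.succ →ₐ[R] S 0 :=
        { toFun := fun x => φ (Pi.single j x)
          map_one' := huj
          map_mul' := fun x y => show φ (Pi.single j (x * y)) = φ (Pi.single j x) * φ (Pi.single j y) by
            rw [← pi_single_mul_single, map_mul]
          map_zero' := show φ (Pi.single j (0 : S j.succ)) = 0 by rw [Pi.single_zero, map_zero]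
          map_add' := fun x y => show φ (Pi.single j (x + y)) = φ (Pi.single j x) + φ (Pi.single j y) by
            rw [Pi.single_add, map_add]
          commutes' := fun c => show φ (Pi.single j ((algebraMap R (S j.succ)) c)) = (algebraMap R (S 0)) c by
            have h1 : Pi.single j ((algebraMap R (S j.succ)) c) =
                c • (Pi.single j (1 : S j.succ) : ∀ t : Fin n, S t.succ) := by
              rw [Algebra.algebraMap_eq_smul_one, Pi.single_smul]
            rw [h1, map_smul]
            have h2 : φ (Pi.single j (1 : S j.succ)) = 1 := huj
            rw [h2, Algebra.algebraMap_eq_smul_one] }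
      have hΨ₀surj : Function.Surjective Ψ₀ := by
        intro s
        obtain ⟨y, hy⟩ := hφsurj s
        exact ⟨y j, by rw [← hy, hortho y]; rfl⟩
      have hΨ₀inj : Function.Injective Ψ₀ := by
        have h10 : (1 : S 0) ≠ 0 := one_ne_zero
        let K : TwoSidedIdeal (S j.succ) := TwoSidedIdeal.mk' {x | Ψ₀ x = 0}
          (by simp)
          (fun {x y} hx hy => by
            simp only [Set.mem_setOf_eq, map_add] at *
            rw [hx, hy, add_zero])
          (fun {x} hx => by
            simp only [Set.mem_setOf_eq, map_neg] at *
            rw [hx, neg_zero])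
          (fun {x y} hy => by
            simp only [Set.mem_setOf_eq, map_mul] at *
            rw [hy, mul_zero])
          (fun {x y} hx => by
            simp only [Set.mem_setOf_eq, map_mul] at *
            rw [hx, zero_mul])
        rcases (IsSimpleRing.simple (R := S j.succ)).eq_bot_or_eq_top K with hK | hK
        · intro x y hxy
          have : (x - y) ∈ K := by
            rw [TwoSidedIdeal.mem_mk']
            simp only [Set.mem_setOf_eq, map_sub]
            rw [hxy, sub_self]
          rw [hK, TwoSidedIdeal.mem_bot] at this
          exact sub_eq_zero.mp this
        · exfalso
          have : (1 : S j.succ) ∈ K := hK ▸ trivial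
          rw [TwoSidedIdeal.mem_mk'] at this
          simp only [Set.mem_setOf_eq, map_one] at this
          exact h10 this
      let Ψ : S j.succ ≃ₐ[R] S 0 := AlgEquiv.ofBijective Ψ₀ ⟨hΨ₀inj, hΨ₀surj⟩
      refine hgraph 0 j.succ (Ne.symm (Fin.succ_ne_zero j)) ⟨Ψ, ?_⟩
      intro c hc
      have h1 : (c : ∀ i, S i) 0 = φ (ρ ⟨c, hc⟩) := (hφρ ⟨c, hc⟩).symm
      have h2 : φ (ρ ⟨c, hc⟩) = φ (Pi.single j ((ρ ⟨c, hc⟩) j)) := hortho _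
      have h3 : (ρ ⟨c, hc⟩) j = c j.succ := rfl
      rw [h1, h2, h3]
      rfl
    · -- T = ⊤ : C contains the 0-axis, conclude C = ⊤
      rw [eq_top_iff]
      intro x _
      have hx0 : ∀ y : S 0, Pi.single 0 y ∈ C := by
        intro y
        rw [← memT, hT]
        trivial
      have : r x ∈ D := hDtop.symm ▸ Algebra.mem_top
      obtain ⟨c, hc, hcx⟩ := this
      have hx : x = c + Pi.single 0 (x 0 - c 0) := by
        funext i
        refine Fin.cases ?_ ?_ i
        · simp only [Pi.add_apply, Pi.single_eq_same]; abel
        · intro j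
          have : c j.succ = x j.succ := congrFun hcx j
          simp only [Pi.add_apply, Pi.single_eq_of_ne (Fin.succ_ne_zero j), add_zero]
          exact this.symm ▸ rfl
      rw [hx]
      exact C.add_mem hc (hx0 _)

/-- Let `R` be a commutative ring and `A = ∏ᵢ Aᵢ` a finite product of
Artinian primary `R`-algebras, each finitely generated as an `R`-module, whose simple
quotients `Aᵢ/J(Aᵢ)` are pairwise isomorphic as `R`-algebras.  Here the simple quotient
of `Aᵢ` is presented as a surjective `R`-algebra map `πᵢ : Aᵢ → Sᵢ` onto a simple ring
`Sᵢ` with kernel the Jacobson radical `J(Aᵢ)`.  (Since the `R`-module structure on each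
`Sᵢ` factors through the field `F = R/I`, where `I` is the annihilator of the simple
quotients, `F`-algebra isomorphisms between the `Sᵢ` are exactly `R`-algebra
isomorphisms, and that is how condition (2) is stated.)

Then a `k`-tuple `a₁, …, a_k` of elements of `A` generates `A` as an `R`-algebra iff
(1) for each `i` the components `a₁ᵢ, …, a_{ki}` generate `Aᵢ` as an `R`-algebra, and
(2) for `i ≠ j` there is no (`F`- equivalently `R`-) algebra isomorphism
`Ψ : Sⱼ ≃ Sᵢ` with `Ψ(πⱼ(a_{lj})) = πᵢ(a_{li})` for all `l`. -/
theorem stmt_1 (R : Type*) [CommRing R] (m : ℕ) (A : Fin m → Type*)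
    [∀ i, Ring (A i)] [∀ i, Algebra R (A i)] [∀ i, IsArtinianRing (A i)]
    [∀ i, Module.Finite R (A i)]
    (S : Fin m → Type*) [∀ i, Ring (S i)] [∀ i, Algebra R (S i)]
    (π : ∀ i, A i →ₐ[R] S i)
    (hsurj : ∀ i, Function.Surjective (π i))
    (hker : ∀ i, RingHom.ker ((π i) : A i →+* S i) = Ideal.jacobson (⊥ : Ideal (A i)))
    (hsimple : ∀ i, IsSimpleRing (S i))
    (hiso : ∀ i j, Nonempty (S i ≃ₐ[R] S j))
    (k : ℕ) (hk : 0 < k) (a : Fin k → ∀ i, A i) :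
    Algebra.adjoin R (Set.range a) = ⊤ ↔
      ((∀ i, Algebra.adjoin R (Set.range fun l => a l i) = ⊤) ∧
        ∀ i j, i ≠ j →
          ¬ ∃ Ψ : S j ≃ₐ[R] S i, ∀ l, π i (a l i) = Ψ (π j (a l j))) := by
  have himg : ∀ i, (⇑(Pi.evalAlgHom R A i) '' Set.range a) = Set.range (fun l => a l i) := by
    intro i
    rw [← Set.range_comp]
    rfl
  constructor
  · intro h
    constructor
    · intro i
      have h0 := congrArg (Subalgebra.map (Pi.evalAlgHom R A i)) h
      rw [AlgHom.map_adjoin, himg i, Algebra.map_top] at h0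
      rw [h0, AlgHom.range_eq_top]
      intro x
      exact ⟨Pi.single i x, Pi.single_eq_same i x⟩
    · rintro i j hij ⟨Ψ, hΨ⟩
      set g₁ : (∀ t, A t) →ₐ[R] S i := (π i).comp (Pi.evalAlgHom R A i) with hg₁
      set g₂ : (∀ t, A t) →ₐ[R] S i := (Ψ.toAlgHom.comp (π j)).comp (Pi.evalAlgHom R A j) with hg₂
      have hEq : Algebra.adjoin R (Set.range a) ≤ AlgHom.equalizer g₁ g₂ := by
        rw [Algebra.adjoin_le_iff]
        rintro x ⟨l, rfl⟩
        exact hΨ l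
      rw [h] at hEq
      have hx : g₁ (Pi.single i 1) = g₂ (Pi.single i 1) := hEq (Algebra.mem_top)
      have hx1 : g₁ (Pi.single i 1) = 1 := by
        rw [hg₁]
        simp only [AlgHom.coe_comp, Function.comp_apply, Pi.evalAlgHom_apply]
        rw [Pi.single_eq_same, map_one]
      have hx2 : g₂ (Pi.single i 1) = 0 := by
        rw [hg₂]
        simp only [AlgHom.coe_comp, Function.comp_apply, Pi.evalAlgHom_apply,
          AlgEquiv.toAlgHom_eq_coe, AlgHom.coe_coe]
        rw [Pi.single_eq_of_ne (Ne.symm hij), map_zero, map_zero]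
      rw [hx1, hx2] at hx
      exact one_ne_zero hx
  · rintro ⟨h1, h2⟩
    set B := Algebra.adjoin R (Set.range a) with hB
    have hBproj : ∀ i, B.map (Pi.evalAlgHom R A i) = ⊤ := by
      intro i
      rw [hB, AlgHom.map_adjoin, himg i]
      exact h1 i
    set Pmap : (∀ t, A t) →ₐ[R] (∀ t, S t) :=
      Pi.algHom R _ (fun t => (π t).comp (Pi.evalAlgHom R A t)) with hPmap
    set C := B.map Pmap with hC
    have hCproj : ∀ i, C.map (Pi.evalAlgHom R S i) = ⊤ := by
      intro i
      rw [hC, Subalgebra.map_map]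
      have he : (Pi.evalAlgHom R S i).comp Pmap = (π i).comp (Pi.evalAlgHom R A i) := by
        ext x
        rfl
      rw [he, ← Subalgebra.map_map, hBproj i, Algebra.map_top, AlgHom.range_eq_top]
      exact hsurj i
    have hCgraph : ∀ i j, i ≠ j → ¬ ∃ Ψ : S j ≃ₐ[R] S i, ∀ c ∈ C, c i = Ψ (c j) := by
      rintro i j hij ⟨Ψ, hΨ⟩
      refine h2 i j hij ⟨Ψ, fun l => ?_⟩
      have hal : Pmap (a l) ∈ C := ⟨a l, Algebra.subset_adjoin ⟨l, rfl⟩, rfl⟩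
      exact hΨ _ hal
    have hCtop : C = ⊤ := subalgebra_pi_simple_eq_top m S C hCproj hCgraph
    set ρ : B →ₐ[R] (∀ t, S t) := Pmap.comp B.val with hρ
    have hρsurj : Function.Surjective ρ := by
      intro y
      have : y ∈ C := hCtop.symm ▸ Algebra.mem_top
      obtain ⟨b, hb, hby⟩ := this
      exact ⟨⟨b, hb⟩, hby⟩
    have hkernil : ∀ x ∈ RingHom.ker ρ.toRingHom, IsNilpotent x := by
      intro x hx
      rw [RingHom.mem_ker] at hx
      have hcoord : ∀ i, IsNilpotent ((x : ∀ t, A t) i) := by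
        intro i
        apply isNilpotent_of_mem_jacobson_bot (A := A i)
        rw [← hker i, RingHom.mem_ker]
        have : (ρ x) i = 0 := by rw [show ρ.toRingHom x = ρ x from rfl] at hx; rw [hx]; rfl
        exact this
      choose N hN using hcoord
      refine ⟨Finset.univ.sup N, ?_⟩
      have hpow : ((x : ∀ t, A t)) ^ (Finset.univ.sup N) = 0 := by
        funext i
        rw [Pi.pow_apply]
        exact pow_eq_zero_of_le (Finset.le_sup (Finset.mem_univ i)) (hN i)
      apply Subtype.ext
      rw [SubmonoidClass.coe_pow]
      simpa using hpow
    have hsingle : ∀ i, (Pi.single i 1 : ∀ t, A t) ∈ B := by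
      intro i
      have hidem : IsIdempotentElem (Pi.single i (1 : S i) : ∀ t, S t) := by
        unfold IsIdempotentElem
        rw [pi_single_mul_single, one_mul]
      have hrange : (Pi.single i (1 : S i) : ∀ t, S t) ∈ ρ.toRingHom.range := by
        obtain ⟨y, hy⟩ := hρsurj (Pi.single i 1)
        exact ⟨y, hy⟩
      obtain ⟨e, he_idem, he⟩ :=
        exists_isIdempotentElem_eq_of_ker_isNilpotent ρ.toRingHom hkernil _ hrange hidem
      have heA : ((e : ∀ t, A t)) * e = e := by
        exact_mod_cast congrArg Subtype.val he_idem
      have hρe : ∀ t, π t ((e : ∀ t, A t) t) = (Pi.single i (1 : S i) : ∀ t, S t) t := by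
        intro t
        exact congrFun (show ρ e = Pi.single i 1 from he) t
      have hcoords : (e : ∀ t, A t) = Pi.single i 1 := by
        funext t
        by_cases ht : t = i
        · subst ht
          have hp1 : π t ((e : ∀ s, A s) t) = 1 := by
            have h' := hρe t
            rwa [Pi.single_eq_same] at h'
          have hidc : IsIdempotentElem ((e : ∀ s, A s) t) := congrFun heA t
          have hnil : IsNilpotent (1 - (e : ∀ s, A s) t) := by
            apply isNilpotent_of_mem_jacobson_bot (A := A t)
            have hp1' : ((π t : A t →+* S t)) ((e : ∀ s, A s) t) = 1 := hp1
            rw [← hker t, RingHom.mem_ker, map_sub, map_one, hp1', sub_self]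
          have hz : 1 - (e : ∀ s, A s) t = 0 := hidc.one_sub.eq_zero_of_isNilpotent hnil
          rw [Pi.single_eq_same]
          have := sub_eq_zero.mp hz
          exact this.symm
        · have hp0 : π t ((e : ∀ s, A s) t) = 0 := by
            have h' := hρe t
            rwa [Pi.single_eq_of_ne ht] at h'
          have hidc : IsIdempotentElem ((e : ∀ s, A s) t) := congrFun heA t
          have hnil : IsNilpotent ((e : ∀ s, A s) t) := by
            apply isNilpotent_of_mem_jacobson_bot (A := A t)
            have hp0' : ((π t : A t →+* S t)) ((e : ∀ s, A s) t) = 0 := hp0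
            rw [← hker t, RingHom.mem_ker, hp0']
          rw [Pi.single_eq_of_ne ht]
          exact hidc.eq_zero_of_isNilpotent hnil
      exact hcoords ▸ e.2
    rw [eq_top_iff]
    intro x _
    have hx : x = ∑ i, Pi.single i (x i) := (Finset.univ_sum_single x).symm
    rw [hx]
    refine Subalgebra.sum_mem _ (fun i _ => ?_)
    have hxi : ∃ b ∈ B, b i = x i := by
      have : x i ∈ B.map (Pi.evalAlgHom R A i) := (hBproj i).symm ▸ Algebra.mem_top
      obtain ⟨b, hb, hbi⟩ := this
      exact ⟨b, hb, hbi⟩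
    obtain ⟨b, hb, hbi⟩ := hxi
    have hmul : (Pi.single i 1 : ∀ t, A t) * b = Pi.single i (x i) := by
      rw [pi_single_mul, one_mul, hbi]
    rw [← hmul]
    exact B.mul_mem (hsingle i) hb
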